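/- Let d ≥ 3, let w ∈ ℝ^d with |w| = 1, let M be a real d×d matrix with Mw = 0, and let φ_0, φ_1 ∈ ℂ^N satisfy i(γ·x)φ_0 = (γ·w)(γ·x)φ_1 + 2(γ·(Mx))φ_0 for all x ∈ ℝ^d. Then: (i) −i φ_1 = (γ·w) φ_0, and (ii) (γ·(My)) φ_0 = i (γ·y) φ_0 for every y ∈ ℝ^d with w·y = 0. -/

import Mathlib

open MeasureTheory Complex Filter ENNReal

noncomputable section

/-- `ℝ^d` with the Euclidean norm. -/
abbrev ESp (d : ℕ) := EuclideanSpace ℝ (Fin d)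

/-- Spinor space `ℂ^N` with the Hermitian norm. -/
abbrev Spinor (N : ℕ) := EuclideanSpace ℂ (Fin N)

/-- Action of an `N × N` complex matrix on a spinor. -/
def mulVecE {N : ℕ} (M : Matrix (Fin N) (Fin N) ℂ) (v : Spinor N) : Spinor N :=
  Matrix.toEuclideanLin M v

/-- `γ·a = ∑ⱼ aⱼ γⱼ` for a real vector `a` (given as a plain function). -/
def gdotF {d N : ℕ} (γ : Fin d → Matrix (Fin N) (Fin N) ℂ) (v : Fin d → ℝ) :
    Matrix (Fin N) (Fin N) ℂ :=
  ∑ j, (v j : ℂ) • γ j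

lemma mulVecE_mul {N : ℕ} (A B : Matrix (Fin N) (Fin N) ℂ) (v : Spinor N) :
    mulVecE (A * B) v = mulVecE A (mulVecE B v) := by
  simp [mulVecE, Matrix.toEuclideanLin_apply, Matrix.mulVec_mulVec]

lemma mulVecE_one {N : ℕ} (v : Spinor N) : mulVecE (1 : Matrix (Fin N) (Fin N) ℂ) v = v := by
  simp [mulVecE, Matrix.toEuclideanLin_apply, Matrix.one_mulVec]

lemma mulVecE_zero {N : ℕ} (v : Spinor N) : mulVecE (0 : Matrix (Fin N) (Fin N) ℂ) v = 0 := by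
  simp [mulVecE]

lemma mulVecE_smul {N : ℕ} (c : ℂ) (A : Matrix (Fin N) (Fin N) ℂ) (v : Spinor N) :
    mulVecE (c • A) v = c • mulVecE A v := by
  simp [mulVecE]

lemma mulVecE_neg {N : ℕ} (A : Matrix (Fin N) (Fin N) ℂ) (v : Spinor N) :
    mulVecE (-A) v = -mulVecE A v := by
  simp [mulVecE]

lemma gdot_anticomm {d N : ℕ} (γ : Fin d → Matrix (Fin N) (Fin N) ℂ)
    (hanti : ∀ j k, γ j * γ k + γ k * γ j = if j = k then (2 : ℂ) • 1 else 0)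
    (a b : Fin d → ℝ) :
    gdotF γ a * gdotF γ b + gdotF γ b * gdotF γ a
      = ((2 : ℂ) * (∑ j, (a j * b j : ℝ))) • 1 := by
  have expand : ∀ u v : Fin d → ℝ, gdotF γ u * gdotF γ v
      = ∑ j, ∑ k, ((u j : ℂ) * (v k : ℂ)) • (γ j * γ k) := by
    intro u v
    rw [gdotF, gdotF, Finset.sum_mul]
    refine Finset.sum_congr rfl fun j _ => ?_
    rw [Finset.mul_sum]
    refine Finset.sum_congr rfl fun k _ => ?_
    rw [smul_mul_assoc, mul_smul_comm, smul_smul]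
  have h1 := expand a b
  have h2 : gdotF γ b * gdotF γ a
      = ∑ j, ∑ k, ((a j : ℂ) * (b k : ℂ)) • (γ k * γ j) := by
    rw [expand b a, Finset.sum_comm]
    refine Finset.sum_congr rfl fun j _ => Finset.sum_congr rfl fun k _ => ?_
    rw [mul_comm]
  rw [h1, h2, ← Finset.sum_add_distrib]
  have : ∀ j ∈ Finset.univ, (∑ k, ((a j : ℂ) * (b k : ℂ)) • (γ j * γ k))
      + (∑ k, ((a j : ℂ) * (b k : ℂ)) • (γ k * γ j))
      = ((a j : ℂ) * (b j : ℂ)) • ((2 : ℂ) • 1) := by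
    intro j _
    rw [← Finset.sum_add_distrib]
    have : ∀ k ∈ Finset.univ, ((a j : ℂ) * (b k : ℂ)) • (γ j * γ k)
        + ((a j : ℂ) * (b k : ℂ)) • (γ k * γ j)
        = ((a j : ℂ) * (b k : ℂ)) • (if j = k then (2:ℂ) • (1 : Matrix (Fin N) (Fin N) ℂ) else 0) := by
      intro k _
      rw [← smul_add, hanti j k]
    rw [Finset.sum_congr rfl this]
    simp
  rw [Finset.sum_congr rfl this]
  push_cast
  rw [Finset.mul_sum, Finset.sum_smul]
  refine Finset.sum_congr rfl fun j _ => ?_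
  rw [smul_smul, mul_comm]

/-- From the identity `i(γ·x)φ₀ = (γ·w)(γ·x)φ₁ + 2(γ·(Mx))φ₀`
(for all `x`), with `|w| = 1` and `Mw = 0`, one deduces `-iφ₁ = (γ·w)φ₀` and
`(γ·(My))φ₀ = i(γ·y)φ₀` for all `y ⊥ w`. -/
theorem equality_case_spinor_relations
    (d : ℕ) (hd : 3 ≤ d) (N : ℕ) (hN : N = 2 ^ (d / 2))
    (γ : Fin d → Matrix (Fin N) (Fin N) ℂ)
    (hherm : ∀ j, (γ j).IsHermitian)
    (hanti : ∀ j k, γ j * γ k + γ k * γ j = if j = k then (2 : ℂ) • 1 else 0)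
    (w : ESp d) (hw : ‖w‖ = 1)
    (M : Matrix (Fin d) (Fin d) ℝ) (hMw : M.mulVec (fun j => w j) = 0)
    (φ₀ φ₁ : Spinor N)
    (hmain : ∀ x : ESp d,
      Complex.I • mulVecE (gdotF γ (fun j => x j)) φ₀
        = mulVecE (gdotF γ (fun j => w j) * gdotF γ (fun j => x j)) φ₁
          + (2 : ℂ) • mulVecE (gdotF γ (M.mulVec (fun j => x j))) φ₀) :
    ((-Complex.I) • φ₁ = mulVecE (gdotF γ (fun j => w j)) φ₀)
      ∧ ∀ y : ESp d, (inner ℝ w y : ℝ) = 0 →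
          mulVecE (gdotF γ (M.mulVec (fun j => y j))) φ₀
            = Complex.I • mulVecE (gdotF γ (fun j => y j)) φ₀ := by
  set Γw := gdotF γ (fun j => w j) with hΓw
  -- ∑ w j ^2 = 1
  have hwsum : (∑ j, w j * w j) = 1 := by
    have := real_inner_self_eq_norm_sq w
    rw [hw] at this
    simp only [PiLp.inner_apply, RCLike.inner_apply, conj_trivial, one_pow] at this
    simpa using this
  have hΓw2 : Γw * Γw = 1 := by
    have h := gdot_anticomm γ hanti (fun j => w j) (fun j => w j)
    rw [hwsum] at h
    have h2 : (2 : ℂ) • (Γw * Γw) = (2 : ℂ) • (1 : Matrix (Fin N) (Fin N) ℂ) := by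
      rw [two_smul]
      simpa [hΓw] using h
    exact smul_right_injective _ (by norm_num : (2:ℂ) ≠ 0) h2
  -- part 1
  have h1 := hmain w
  rw [hMw] at h1
  have hzero : gdotF γ (0 : Fin d → ℝ) = 0 := by simp [gdotF]
  rw [hzero, mulVecE_zero, smul_zero, add_zero, mulVecE_mul, ← hΓw] at h1
  rw [show mulVecE Γw (mulVecE Γw φ₁) = mulVecE (Γw * Γw) φ₁ from (mulVecE_mul _ _ _).symm,
    hΓw2, mulVecE_one] at h1
  have part1 : (-Complex.I) • φ₁ = mulVecE Γw φ₀ := by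
    rw [← h1, smul_smul]
    simp
  refine ⟨part1, ?_⟩
  intro y hy
  set Γy := gdotF γ (fun j => y j) with hΓy
  have hysum : (∑ j, w j * y j) = 0 := by
    simpa [PiLp.inner_apply, RCLike.inner_apply, mul_comm] using hy
  have hanti_wy : Γw * Γy + Γy * Γw = 0 := by
    have h := gdot_anticomm γ hanti (fun j => w j) (fun j => y j)
    rw [hysum] at h
    simpa [hΓw, hΓy] using h
  have hφ₁ : φ₁ = Complex.I • mulVecE Γw φ₀ := by
    rw [← h1]
  have h2 := hmain y
  rw [← hΓy, mulVecE_mul, hφ₁] at h2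
  -- compute Γw (Γy (I • Γw φ₀)) = -I • Γy φ₀
  have hsmul : ∀ (A : Matrix (Fin N) (Fin N) ℂ) (c : ℂ) (v : Spinor N),
      mulVecE A (c • v) = c • mulVecE A v :=
    fun A c v => map_smul (Matrix.toEuclideanLin A) c v
  have hcomp : mulVecE Γw (mulVecE Γy (Complex.I • mulVecE Γw φ₀))
      = (-Complex.I) • mulVecE Γy φ₀ := by
    rw [hsmul, hsmul, ← mulVecE_mul, ← mulVecE_mul]
    have e3 : Γw * Γy * Γw = -Γy := by
      have h' : Γw * Γy = -(Γy * Γw) := eq_neg_of_add_eq_zero_left hanti_wy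
      rw [h', neg_mul, mul_assoc, hΓw2, mul_one]
    rw [e3, mulVecE_neg, smul_neg, neg_smul]
  rw [hcomp] at h2
  -- h2 : I • Γy φ₀ = -I • Γy φ₀ + 2 • (γ(My))φ₀
  have h3 : (2 : ℂ) • (Complex.I • mulVecE Γy φ₀)
      = (2 : ℂ) • mulVecE (gdotF γ (M.mulVec (fun j => y j))) φ₀ := by
    have : Complex.I • mulVecE Γy φ₀ - (-Complex.I) • mulVecE Γy φ₀
        = (2 : ℂ) • mulVecE (gdotF γ (M.mulVec (fun j => y j))) φ₀ := by
      rw [h2]; abel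
    rw [← this, neg_smul, sub_neg_eq_add, two_smul]
  exact (smul_right_injective _ (by norm_num : (2:ℂ) ≠ 0) h3).symm
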